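/- Let D=(V,E) be a DAG with V={1,...,d}, let c_{ik}>0 for i∈V and k∈pa(i), c_{ii}>0, and let Z_1,...,Z_d be independent atom-free random variables supported on [0,∞). Then the max-linear structural equation system X_i = max( max_{k∈pa(i)} c_{ik} X_k , c_{ii} Z_i ) has the unique solution X_i = max_{j∈An(i)} a_{ij} Z_j, where a_{ij} = max over paths p from j to i of the path weight d(p) = c_{jj} c_{k1 j} ... c_{i k_{ℓ-1}}, a_{ii}=c_{ii}, and a_{ij}=0 for j∉An(i). -/

import Mathlib

open scoped BigOperators

/-- A path in the directed graph with edge relation `E` (E k i meaning edge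
k → i) from `j` to `i`, represented by the list of its nodes. -/
def IsPathList {d : ℕ} (E : Fin d → Fin d → Prop) (j i : Fin d)
    (l : List (Fin d)) : Prop :=
  l.head? = some j ∧ l.getLast? = some i ∧ l.Chain' E

/-- The weight d(p) = c_{jj}·c_{ℓ₁ℓ₀}···c_{ℓ_mℓ_{m-1}} of a path
p : j = ℓ₀ → ℓ₁ → ⋯ → ℓ_m = i (the weight of the edge k → i is c i k). -/
noncomputable def pathWeight {d : ℕ} (c : Fin d → Fin d → ℝ) :
    List (Fin d) → ℝ
  | [] => 1
  | x :: xs => c x x * (((x :: xs).zip xs).map fun p => c p.2 p.1).prod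

/-- The max-linear coefficient a_{ij}: the supremum of path weights over all
paths j ⇝ i (including the trivial path [j] of weight c_{jj} when j = i);
it equals 0 (= sSup ∅ in ℝ) when j ∉ An(i). -/
noncomputable def mlCoeff {d : ℕ} (E : Fin d → Fin d → Prop)
    (c : Fin d → Fin d → ℝ) (i j : Fin d) : ℝ :=
  sSup {w | ∃ l, IsPathList E j i l ∧ pathWeight c l = w}

/-- The max-linear function X = A ×_max z, X_i = max_{j} a_{ij} z_j. -/
noncomputable def mlSol {d : ℕ} (E : Fin d → Fin d → Prop)
    (c : Fin d → Fin d → ℝ) (z : Fin d → ℝ) (i : Fin d) : ℝ :=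
  ⨆ j, mlCoeff E c i j * z j

namespace MLAux

variable {d : ℕ} {E : Fin d → Fin d → Prop} {c : Fin d → Fin d → ℝ}

lemma chain'_transGen {l : List (Fin d)} {x b : Fin d}
    (h : (x :: l).Chain' E) (hb : b ∈ l) : Relation.TransGen E x b := by
  induction l generalizing x with
  | nil => simp at hb
  | cons y ys ih =>
    unfold List.Chain' at h
    rw [List.isChain_cons_cons] at h
    rcases List.mem_cons.mp hb with rfl | hb'
    · exact Relation.TransGen.single h.1
    · exact (Relation.TransGen.single h.1).trans (ih h.2 hb')

lemma chain'_nodup (hacyc : ∀ i, ¬ Relation.TransGen E i i) :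
    ∀ {l : List (Fin d)}, l.Chain' E → l.Nodup := by
  intro l
  induction l with
  | nil => simp
  | cons x xs ih =>
    intro h
    exact List.nodup_cons.mpr ⟨fun hx => hacyc x (chain'_transGen h hx), ih h.tail⟩

noncomputable def edgeProd (c : Fin d → Fin d → ℝ) : List (Fin d) → ℝ
  | [] => 1
  | [_] => 1
  | x :: y :: t => c y x * edgeProd c (y :: t)

lemma prod_eq_edgeProd : ∀ (xs : List (Fin d)) (x : Fin d),
    (((x :: xs).zip xs).map fun p => c p.2 p.1).prod = edgeProd c (x :: xs) := by
  intro xs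
  induction xs with
  | nil => intro x; simp [edgeProd]
  | cons y ys ih => intro x; simp [edgeProd, ← ih y]

lemma pathWeight_cons (x : Fin d) (xs : List (Fin d)) :
    pathWeight c (x :: xs) = c x x * edgeProd c (x :: xs) := by
  rw [pathWeight, prod_eq_edgeProd]

lemma edgeProd_append (i : Fin d) :
    ∀ (t : List (Fin d)) (x : Fin d),
      edgeProd c ((x :: t) ++ [i]) = edgeProd c (x :: t) * c i ((x :: t).getLast (by simp)) := by
  intro t
  induction t with
  | nil => intro x; simp [edgeProd]
  | cons y ys ih =>
    intro x
    show edgeProd c (x :: y :: (ys ++ [i])) = _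
    rw [show edgeProd c (x :: y :: (ys ++ [i])) = c y x * edgeProd c (y :: (ys ++ [i])) from rfl]
    rw [show (y :: (ys ++ [i])) = (y :: ys) ++ [i] from rfl, ih y]
    rw [show edgeProd c (x :: y :: ys) = c y x * edgeProd c (y :: ys) from rfl]
    rw [show (x :: y :: ys).getLast (by simp) = (y :: ys).getLast (by simp) from rfl]
    ring

lemma pathWeight_append {l : List (Fin d)} {k : Fin d} (hl : l ≠ [])
    (hk : l.getLast? = some k) (i : Fin d) :
    pathWeight c (l ++ [i]) = pathWeight c l * c i k := by
  obtain ⟨x, t, rfl⟩ := List.exists_cons_of_ne_nil hl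
  have hcons : (x :: t) ++ [i] = x :: (t ++ [i]) := by simp
  rw [hcons, pathWeight_cons, ← hcons, edgeProd_append, pathWeight_cons]
  rw [List.getLast?_eq_getLast (by simp)] at hk
  rw [Option.some_inj.mp hk]
  ring

/-- The recursive characterization of the path-weight set. -/
lemma mem_pathSet_iff {i j : Fin d} {w : ℝ} :
    (∃ l, IsPathList E j i l ∧ pathWeight c l = w) ↔
      (j = i ∧ w = c i i) ∨
      ∃ k, E k i ∧ ∃ w', (∃ l, IsPathList E j k l ∧ pathWeight c l = w') ∧ w = w' * c i k := by
  constructor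
  · rintro ⟨l, ⟨hh, hl, hch⟩, rfl⟩
    rcases List.eq_nil_or_concat l with rfl | ⟨ys, a, rfl⟩
    · simp at hh
    · rw [List.concat_eq_append] at hh hl hch ⊢
      have ha : a = i := by simpa [List.getLast?_concat] using hl
      rw [ha] at hch hh ⊢
      by_cases hys : ys = []
      · subst hys
        left
        refine ⟨?_, by simp [pathWeight_cons, edgeProd]⟩
        simp only [List.nil_append, List.head?_cons, Option.some_inj] at hh
        exact hh.symm
      · right
        unfold List.Chain' at hch
        rw [List.isChain_append] at hch
        have hk : ys.getLast? = some (ys.getLast hys) := List.getLast?_eq_getLast hys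
        have hEki : E (ys.getLast hys) i := hch.2.2 _ hk i rfl
        have hhead : ys.head? = some j := by
          obtain ⟨x, t, rfl⟩ := List.exists_cons_of_ne_nil hys
          simpa using hh
        exact ⟨ys.getLast hys, hEki, pathWeight c ys, ⟨ys, ⟨hhead, hk, hch.1⟩, rfl⟩,
          pathWeight_append hys hk i⟩
  · rintro (⟨h1, rfl⟩ | ⟨k, hEki, w', ⟨l, ⟨hh, hl, hch⟩, rfl⟩, rfl⟩)
    · exact ⟨[j], ⟨rfl, by simp [h1], List.isChain_singleton _⟩, by simp [pathWeight_cons, edgeProd, h1]⟩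
    · have hne : l ≠ [] := by rintro rfl; simp at hh
      refine ⟨l ++ [i], ⟨?_, by simp [List.getLast?_concat], ?_⟩, pathWeight_append hne hl i⟩
      · obtain ⟨x, t, rfl⟩ := List.exists_cons_of_ne_nil hne
        simpa using hh
      · unfold List.Chain'
        rw [List.isChain_append]
        refine ⟨hch, by simp, ?_⟩
        intro x hx y hy
        simp only [List.head?_cons, Option.mem_some_iff] at hy
        subst hy
        rw [hl] at hx
        exact (Option.mem_some_iff.mp hx) ▸ hEki

lemma pathSet_finite (hacyc : ∀ i, ¬ Relation.TransGen E i i) (i j : Fin d) :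
    {w | ∃ l, IsPathList E j i l ∧ pathWeight c l = w}.Finite := by
  have h1 : {w | ∃ l, IsPathList E j i l ∧ pathWeight c l = w}
      ⊆ pathWeight c '' {l : List (Fin d) | l.length ≤ d} := by
    rintro w ⟨l, hl, rfl⟩
    refine ⟨l, ?_, rfl⟩
    have := (chain'_nodup hacyc hl.2.2).length_le_card
    simpa using this
  exact (((List.finite_length_le (Fin d) d)).image _).subset h1

lemma pathList_reflTransGen {i j : Fin d} {l : List (Fin d)}
    (h : IsPathList E j i l) : Relation.ReflTransGen E j i := by
  obtain ⟨hh, hl, hch⟩ := h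
  obtain ⟨x, xs, rfl⟩ := List.exists_cons_of_ne_nil (l := l) (by rintro rfl; simp at hh)
  have hx : x = j := by simpa using hh
  rcases xs.eq_nil_or_concat with rfl | ⟨ys, a, rfl⟩
  · have hxi : x = i := by simpa using hl
    rw [← hx, ← hxi]
  · rw [List.concat_eq_append] at hl hch
    have hlast : (x :: (ys ++ [a])).getLast? = some a := by
      rw [show x :: (ys ++ [a]) = (x :: ys) ++ [a] from rfl, List.getLast?_concat]
    have ha : a = i := Option.some_inj.mp (hlast.symm.trans hl)
    have htg : Relation.TransGen E x a := chain'_transGen hch (by simp)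
    rw [← hx, ← ha]
    exact htg.to_reflTransGen

lemma mlCoeff_self (hacyc : ∀ i, ¬ Relation.TransGen E i i) (i : Fin d) :
    mlCoeff E c i i = c i i := by
  have hset : {w | ∃ l, IsPathList E i i l ∧ pathWeight c l = w} = {c i i} := by
    ext w
    simp only [Set.mem_setOf_eq, Set.mem_singleton_iff]
    constructor
    · intro hw
      rcases mem_pathSet_iff.mp hw with ⟨_, hw'⟩ | ⟨k, hEki, w', ⟨l, hpl, -⟩, -⟩
      · exact hw'
      · exact absurd (Relation.TransGen.tail' (pathList_reflTransGen hpl) hEki) (hacyc i)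
    · rintro rfl
      exact mem_pathSet_iff.mpr (Or.inl ⟨rfl, rfl⟩)
  rw [mlCoeff, hset, csSup_singleton]

lemma mlCoeff_nonReach {i j : Fin d} (h : ¬ Relation.ReflTransGen E j i) :
    mlCoeff E c i j = 0 := by
  have hset : {w | ∃ l, IsPathList E j i l ∧ pathWeight c l = w} = ∅ := by
    ext w
    simp only [Set.mem_setOf_eq, Set.mem_empty_iff_false, iff_false, not_exists]
    rintro l ⟨hl, -⟩
    exact h (pathList_reflTransGen hl)
  rw [mlCoeff, hset, Real.sSup_empty]

lemma le_mlCoeff (hacyc : ∀ i, ¬ Relation.TransGen E i i) {i j : Fin d} {w : ℝ}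
    (h : ∃ l, IsPathList E j i l ∧ pathWeight c l = w) : w ≤ mlCoeff E c i j :=
  le_csSup (pathSet_finite hacyc i j).bddAbove h

lemma mlCoeff_mem (hacyc : ∀ i, ¬ Relation.TransGen E i i) {i j : Fin d}
    (hne : {w | ∃ l, IsPathList E j i l ∧ pathWeight c l = w}.Nonempty) :
    ∃ l, IsPathList E j i l ∧ pathWeight c l = mlCoeff E c i j :=
  Set.Nonempty.csSup_mem hne (pathSet_finite hacyc i j)

lemma mlCoeff_of_empty {i j : Fin d}
    (hne : ¬ {w | ∃ l, IsPathList E j i l ∧ pathWeight c l = w}.Nonempty) :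
    mlCoeff E c i j = 0 := by
  rw [mlCoeff, Set.not_nonempty_iff_eq_empty.mp hne, Real.sSup_empty]

lemma le_mlSol (i j : Fin d) (z : Fin d → ℝ) :
    mlCoeff E c i j * z j ≤ mlSol E c z i :=
  le_ciSup (f := fun j => mlCoeff E c i j * z j) (Set.Finite.bddAbove (Set.finite_range _)) j

lemma mlSol_nonneg (hacyc : ∀ i, ¬ Relation.TransGen E i i)
    (hdiagpos : ∀ i, 0 < c i i) (z : Fin d → ℝ) (hz : ∀ j, 0 ≤ z j) (i : Fin d) :
    0 ≤ mlSol E c z i := by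
  have h1 : 0 ≤ mlCoeff E c i i * z i := by
    rw [mlCoeff_self hacyc i]
    exact mul_nonneg (hdiagpos i).le (hz i)
  exact h1.trans (le_mlSol i i z)

lemma mlSol_fixed (hacyc : ∀ i, ¬ Relation.TransGen E i i)
    (hdiagpos : ∀ i, 0 < c i i) (hedgepos : ∀ i k, E k i → 0 < c i k)
    (z : Fin d → ℝ) (hz : ∀ j, 0 ≤ z j) (i : Fin d) :
    mlSol E c z i = (⨆ k, ⨆ (_ : E k i), c i k * mlSol E c z k) ⊔ c i i * z i := by
  haveI : Nonempty (Fin d) := ⟨i⟩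
  apply le_antisymm
  · refine ciSup_le fun j => ?_
    by_cases hne : {w | ∃ l, IsPathList E j i l ∧ pathWeight c l = w}.Nonempty
    · have hmem := mlCoeff_mem hacyc hne
      rcases mem_pathSet_iff.mp hmem with ⟨hji, hw⟩ | ⟨k, hEki, w', hw'mem, hw⟩
      · rw [hw, hji]
        exact le_sup_right
      · have h1 : w' ≤ mlCoeff E c k j := le_mlCoeff hacyc hw'mem
        have hck : (0:ℝ) ≤ c i k := (hedgepos i k hEki).le
        calc mlCoeff E c i j * z j = c i k * (w' * z j) := by rw [hw]; ring
          _ ≤ c i k * (mlCoeff E c k j * z j) :=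
              mul_le_mul_of_nonneg_left (mul_le_mul_of_nonneg_right h1 (hz j)) hck
          _ ≤ c i k * mlSol E c z k := mul_le_mul_of_nonneg_left (le_mlSol k j z) hck
          _ ≤ ⨆ k, ⨆ (_ : E k i), c i k * mlSol E c z k := by
              have hb1 : BddAbove (Set.range fun k => ⨆ (_ : E k i), c i k * mlSol E c z k) :=
                Set.Finite.bddAbove (Set.finite_range _)
              have step1 : c i k * mlSol E c z k
                  ≤ ⨆ (_ : E k i), c i k * mlSol E c z k :=
                le_ciSup (f := fun _ : E k i => c i k * mlSol E c z k)
                  (BddAbove.mono (Set.range_subset_iff.mpr fun _ =>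
                    Set.mem_singleton _) (Set.finite_singleton _).bddAbove) hEki
              exact step1.trans (le_ciSup hb1 k)
          _ ≤ _ := le_sup_left
    · rw [mlCoeff_of_empty hne, zero_mul]
      exact le_trans (mul_nonneg (hdiagpos i).le (hz i)) le_sup_right
  · refine sup_le ?_ ?_
    · refine Real.iSup_le (fun k => Real.iSup_le (fun hEki => ?_)
        (mlSol_nonneg hacyc hdiagpos z hz i)) (mlSol_nonneg hacyc hdiagpos z hz i)
      obtain ⟨j0, hj0⟩ := exists_eq_ciSup_of_finite (f := fun j => mlCoeff E c k j * z j)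
      rw [show mlSol E c z k = ⨆ j, mlCoeff E c k j * z j from rfl, ← hj0]
      by_cases hne : {w | ∃ l, IsPathList E j0 k l ∧ pathWeight c l = w}.Nonempty
      · have hmem := mlCoeff_mem hacyc hne
        have hnew : mlCoeff E c k j0 * c i k ≤ mlCoeff E c i j0 :=
          le_mlCoeff hacyc (mem_pathSet_iff.mpr (Or.inr ⟨k, hEki, _, hmem, rfl⟩))
        calc c i k * (mlCoeff E c k j0 * z j0) = (mlCoeff E c k j0 * c i k) * z j0 := by ring
          _ ≤ mlCoeff E c i j0 * z j0 := mul_le_mul_of_nonneg_right hnew (hz j0)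
          _ ≤ mlSol E c z i := le_mlSol i j0 z
      · rw [mlCoeff_of_empty hne, zero_mul, mul_zero]
        exact mlSol_nonneg hacyc hdiagpos z hz i
    · have h := le_mlSol (E := E) (c := c) i i z
      rwa [mlCoeff_self hacyc i] at h

lemma mlSol_unique (hacyc : ∀ i, ¬ Relation.TransGen E i i)
    (hdiagpos : ∀ i, 0 < c i i) (hedgepos : ∀ i k, E k i → 0 < c i k)
    (z : Fin d → ℝ) (hz : ∀ j, 0 ≤ z j) (x : Fin d → ℝ)
    (hx : ∀ i, x i = (⨆ k, ⨆ (_ : E k i), c i k * x k) ⊔ c i i * z i) :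
    x = mlSol E c z := by
  haveI : IsTrans (Fin d) (Relation.TransGen E) := ⟨fun _ _ _ => Relation.TransGen.trans⟩
  haveI : IsIrrefl (Fin d) (Relation.TransGen E) := ⟨hacyc⟩
  have hwf : WellFounded (Relation.TransGen E) := Finite.wellFounded_of_trans_of_irrefl _
  funext i
  refine hwf.induction (C := fun i => x i = mlSol E c z i) i fun i ih => ?_
  show x i = mlSol E c z i
  rw [hx i, mlSol_fixed hacyc hdiagpos hedgepos z hz i]
  congr 1
  exact iSup_congr fun k => iSup_congr fun h => by
    rw [show x k = mlSol E c z k from ih k (Relation.TransGen.single h)]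

end MLAux

/-- Let D = (V,E) be a DAG on V = {1,…,d}, with positive weights
c_{ik} for k ∈ pa(i) and c_{ii} > 0, and let Z₁,…,Z_d be independent atom-free
random variables supported on [0,∞). Then the max-linear structural equation
system X_i = max(max_{k∈pa(i)} c_{ik}X_k, c_{ii}Z_i) has the unique solution
X_i = max_{j∈An(i)} a_{ij}Z_j, where a_{ij} is the maximal path weight over
paths j ⇝ i, a_{ii} = c_{ii}, and a_{ij} = 0 for j ∉ An(i). -/
theorem maxlinear_sem_unique_solution {d : ℕ}
    (E : Fin d → Fin d → Prop) (c : Fin d → Fin d → ℝ)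
    (hacyc : ∀ i, ¬ Relation.TransGen E i i)
    (hdiagpos : ∀ i, 0 < c i i)
    (hedgepos : ∀ i k, E k i → 0 < c i k)
    (Ω : Type) [MeasurableSpace Ω] (μ : MeasureTheory.Measure Ω)
    [MeasureTheory.IsProbabilityMeasure μ]
    (Z : Fin d → Ω → ℝ) (hZmeas : ∀ i, Measurable (Z i))
    (hindep : ProbabilityTheory.iIndepFun Z μ)
    (hZnn : ∀ i ω, 0 ≤ Z i ω)
    (hatomfree : ∀ i x, μ {ω | Z i ω = x} = 0) :
    (∀ i, mlCoeff E c i i = c i i)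
    ∧ (∀ i j, ¬ Relation.ReflTransGen E j i → mlCoeff E c i j = 0)
    ∧ ∀ ω : Ω,
        (∀ i, mlSol E c (fun j => Z j ω) i
            = (⨆ k, ⨆ (_ : E k i), c i k * mlSol E c (fun j => Z j ω) k)
              ⊔ c i i * Z i ω)
        ∧ ∀ x : Fin d → ℝ,
            (∀ i, x i = (⨆ k, ⨆ (_ : E k i), c i k * x k) ⊔ c i i * Z i ω) →
            x = mlSol E c (fun j => Z j ω) := by
  refine ⟨fun i => MLAux.mlCoeff_self hacyc i,
    fun i j h => MLAux.mlCoeff_nonReach h,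
    fun ω => ⟨fun i => MLAux.mlSol_fixed hacyc hdiagpos hedgepos _ (fun j => hZnn j ω) i,
      fun x hx => MLAux.mlSol_unique hacyc hdiagpos hedgepos _ (fun j => hZnn j ω) x hx⟩⟩
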